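/- Let X be a locally connected hereditarily Baire space, Y a topological space, and f : X → Y an Fσ-measurable weakly Gibson mapping. Then for every connected set C ⊆ X whose interior U is connected and satisfies C ⊆ closure(U), the image f(C) is connected. -/

import Mathlib

open Set Topology

/-- A set is Fσ if it is a countable union of closed sets. -/
def IsFsigma {X : Type*} [TopologicalSpace X] (s : Set X) : Prop :=
  ∃ F : ℕ → Set X, (∀ n, IsClosed (F n)) ∧ s = ⋃ n, F n

/-- Baire category lemma: if `K` is closed with `↥K` a Baire space, `U` open with
`K ∩ U` nonempty and covered by countably many closed sets `C n`, then some `C n`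
contains a relatively open nonempty piece of `K` meeting `K ∩ U`. -/
lemma baire_piece {X : Type*} [TopologicalSpace X] {K U : Set X} (hK : IsClosed K)
    [BaireSpace K] (C : ℕ → Set X) (hC : ∀ n, IsClosed (C n)) (hU : IsOpen U)
    (hne : (K ∩ U).Nonempty) (hcov : K ∩ U ⊆ ⋃ n, C n) :
    ∃ n, ∃ O : Set X, IsOpen O ∧ (O ∩ (K ∩ U)).Nonempty ∧ O ∩ K ⊆ C n := by
  set D' : Set K := (↑) ⁻¹' U with hD'def
  have hD'open : IsOpen D' := hU.preimage continuous_subtype_val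
  obtain ⟨d0, hd0K, hd0U⟩ := hne
  have hD'ne : D'.Nonempty := ⟨⟨d0, hd0K⟩, hd0U⟩
  have key : ∃ n, (interior ((↑) ⁻¹' (C n) : Set K) ∩ D').Nonempty := by
    by_contra h
    push_neg at h
    have hmeag : IsMeagre D' := by
      have hsub : D' ⊆ ⋃ n, (((↑) ⁻¹' (C n) : Set K) ∩ D') := by
        intro x hx
        obtain ⟨n, hn⟩ := mem_iUnion.1 (hcov ⟨x.2, hx⟩)
        exact mem_iUnion.2 ⟨n, hn, hx⟩
      have hnwd : ∀ n, IsNowhereDense (((↑) ⁻¹' (C n) : Set K) ∩ D') := by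
        intro n
        rw [IsNowhereDense, eq_empty_iff_forall_notMem]
        intro z hz
        have hcl : closure (((↑) ⁻¹' (C n) : Set K) ∩ D') ⊆ ((↑) ⁻¹' (C n) : Set K) :=
          closure_minimal inter_subset_left ((hC n).preimage continuous_subtype_val)
        have hclD : closure (((↑) ⁻¹' (C n) : Set K) ∩ D') ⊆ closure D' :=
          closure_mono inter_subset_right
        -- interior of the closure is an open set inside closure D', so it meets D'
        have hopen : IsOpen (interior (closure (((↑) ⁻¹' (C n) : Set K) ∩ D'))) := isOpen_interior
        have hzD' : (interior (closure (((↑) ⁻¹' (C n) : Set K) ∩ D')) ∩ D').Nonempty := by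
          have hzcl : z ∈ closure D' := hclD (interior_subset hz)
          exact mem_closure_iff.1 hzcl _ hopen hz
        obtain ⟨w, hw1, hw2⟩ := hzD'
        have hw3 : w ∈ interior ((↑) ⁻¹' (C n) : Set K) := interior_mono hcl hw1
        exact (eq_empty_iff_forall_notMem.1 (h n) w) ⟨hw3, hw2⟩
      refine isMeagre_iff_countable_union_isNowhereDense.2
        ⟨Set.range (fun n => ((↑) ⁻¹' (C n) : Set K) ∩ D'), ?_, countable_range _, ?_⟩
      · rintro t ⟨n, rfl⟩
        exact hnwd n
      · rwa [sUnion_range]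
    have hdense : Dense (D'ᶜ) := dense_of_mem_residual hmeag
    obtain ⟨w, hw1, hw2⟩ := hdense.inter_open_nonempty D' hD'open hD'ne
    exact hw2 hw1
  obtain ⟨n, d, hdint, hdD'⟩ := key
  obtain ⟨t, htsub, htopen, hdt⟩ := mem_interior.1 hdint
  obtain ⟨O, hOopen, hOeq⟩ := isOpen_induced_iff.1 htopen
  refine ⟨n, O, hOopen, ⟨↑d, ?_, d.2, hdD'⟩, ?_⟩
  · have : d ∈ Subtype.val ⁻¹' O := hOeq ▸ hdt
    exact this
  · rintro p ⟨hpO, hpK⟩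
    have h1 : (⟨p, hpK⟩ : K) ∈ Subtype.val ⁻¹' O := hpO
    have h2 : (⟨p, hpK⟩ : K) ∈ t := hOeq ▸ h1
    exact htsub h2

lemma gibson_contra {X Y : Type*} [TopologicalSpace X] [LocallyConnectedSpace X]
    [TopologicalSpace Y] (f : X → Y)
    (hwG : ∀ U : Set X, IsOpen U → IsConnected U → f '' closure U ⊆ closure (f '' U))
    {U : Set X} (hU : IsOpen U) {V W : Set Y} (hV : IsOpen V)
    (hcov : f '' U ⊆ V ∪ W) (hVW : f '' U ∩ (V ∩ W) = ∅)
    {O : Set X} (hO : IsOpen O) {x : X} (hxO : x ∈ O) (hxU : x ∈ U)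
    (hxA : x ∈ closure (U ∩ f ⁻¹' V)) (hxB : x ∈ closure (U ∩ f ⁻¹' W))
    (hOD : ∀ p, p ∈ O → p ∈ U → p ∈ closure (U ∩ f ⁻¹' V) →
      p ∈ closure (U ∩ f ⁻¹' W) → f p ∈ V) :
    False := by
  set A := U ∩ f ⁻¹' V with hAdef
  set B := U ∩ f ⁻¹' W with hBdef
  have hdisj : ∀ p, p ∈ U → f p ∈ V → f p ∈ W → False := fun p hp h1 h2 =>
    (eq_empty_iff_forall_notMem.1 hVW (f p)) ⟨⟨p, hp, rfl⟩, h1, h2⟩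
  set G := connectedComponentIn (O ∩ U) x with hGdef
  have hxOU : x ∈ O ∩ U := ⟨hxO, hxU⟩
  have hGopen : IsOpen G := (hO.inter hU).connectedComponentIn
  have hGconn : IsConnected G := isConnected_connectedComponentIn_iff.2 hxOU
  have hGsub : G ⊆ O ∩ U := connectedComponentIn_subset _ _
  have hxG : x ∈ G := mem_connectedComponentIn hxOU
  obtain ⟨b, hbG, hbB⟩ := mem_closure_iff.1 hxB G hGopen hxG
  have hbnA : b ∉ closure A := by
    intro hbA
    exact hdisj b hbB.1 (hOD b (hGsub hbG).1 (hGsub hbG).2 hbA (subset_closure hbB)) hbB.2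
  set O₂ := connectedComponentIn (G \ closure A) b with hO₂def
  have hbmem : b ∈ G \ closure A := ⟨hbG, hbnA⟩
  have hO₂open : IsOpen O₂ := (hGopen.sdiff isClosed_closure).connectedComponentIn
  have hO₂conn : IsConnected O₂ := isConnected_connectedComponentIn_iff.2 hbmem
  have hO₂sub : O₂ ⊆ G \ closure A := connectedComponentIn_subset _ _
  have hbO₂ : b ∈ O₂ := mem_connectedComponentIn hbmem
  have hO₂B : O₂ ⊆ B := by
    intro p hp
    have hpU : p ∈ U := (hGsub (hO₂sub hp).1).2
    rcases hcov ⟨p, hpU, rfl⟩ with h | h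
    · exact absurd (subset_closure (Set.mem_inter hpU h)) (hO₂sub hp).2
    · exact mem_inter hpU h
  have hrel : ∀ z, z ∈ closure O₂ → z ∈ G \ closure A → z ∈ O₂ := by
    intro z hz hz2
    have hpre : IsPreconnected (insert z O₂) :=
      hO₂conn.isPreconnected.subset_closure (subset_insert z O₂)
        (insert_subset hz subset_closure)
    have := hpre.subset_connectedComponentIn (mem_insert_iff.2 (Or.inr hbO₂))
      (insert_subset hz2 hO₂sub)
    exact this (mem_insert z O₂)
  have hz : ∃ z, z ∈ G ∧ z ∈ closure O₂ ∧ z ∉ O₂ := by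
    by_contra h
    push_neg at h
    have hGsplit : G ⊆ O₂ ∪ (closure O₂)ᶜ := by
      intro p hp
      rcases em (p ∈ closure O₂) with h' | h'
      · exact Or.inl (h p hp h')
      · exact Or.inr h'
    have hne1 : (G ∩ O₂).Nonempty := ⟨b, hbG, hbO₂⟩
    have hne2 : (G ∩ (closure O₂)ᶜ).Nonempty := by
      refine ⟨x, hxG, fun hc => ?_⟩
      exact (hO₂sub (h x hxG hc)).2 hxA
    obtain ⟨p, _, hp1, hp2⟩ := hGconn.isPreconnected O₂ (closure O₂)ᶜ hO₂open
      isClosed_closure.isOpen_compl hGsplit hne1 hne2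
    exact hp2 (subset_closure hp1)
  obtain ⟨z, hzG, hzcl, hznO₂⟩ := hz
  have hzA : z ∈ closure A := by
    by_contra h
    exact hznO₂ (hrel z hzcl ⟨hzG, h⟩)
  have hzB : z ∈ closure B := closure_mono hO₂B hzcl
  have hzU : z ∈ U := (hGsub hzG).2
  have hzO : z ∈ O := (hGsub hzG).1
  have hfzV : f z ∈ V := hOD z hzO hzU hzA hzB
  have hfzcl : f z ∈ closure (f '' O₂) := hwG O₂ hO₂open hO₂conn ⟨z, hzcl, rfl⟩
  obtain ⟨y, hyV, p, hpO₂, rfl⟩ := mem_closure_iff.1 hfzcl V hV hfzV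
  exact hdisj p (hO₂B hpO₂).1 hyV (hO₂B hpO₂).2

theorem stmt6 {X Y : Type*} [TopologicalSpace X] [LocallyConnectedSpace X] [TopologicalSpace Y]
    (hBaire : ∀ F : Set X, IsClosed F → BaireSpace F)
    (f : X → Y)
    (hmeas : ∀ V : Set Y, IsOpen V → IsFsigma (f ⁻¹' V))
    (hwG : ∀ U : Set X, IsOpen U → IsConnected U → f '' closure U ⊆ closure (f '' U))
    (C : Set X) (hC : IsConnected C) (hint : IsConnected (interior C))
    (hdense : C ⊆ closure (interior C)) :
    IsConnected (f '' C) := by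
  have hUo : IsOpen (interior C) := isOpen_interior
  have hpre : IsPreconnected (f '' interior C) := by
    rintro V W hV hW hcovY ⟨_, ⟨a, haU, rfl⟩, haV⟩ ⟨_, ⟨c, hcU, rfl⟩, hcW⟩
    by_contra hne
    rw [Set.not_nonempty_iff_eq_empty] at hne
    set U := interior C with hUdef
    set A := U ∩ f ⁻¹' V with hAdef
    set B := U ∩ f ⁻¹' W with hBdef
    have hABU : ∀ p ∈ U, p ∈ A ∨ p ∈ B := by
      intro p hp
      rcases hcovY ⟨p, hp, rfl⟩ with h | h
      · exact Or.inl ⟨hp, h⟩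
      · exact Or.inr ⟨hp, h⟩
    have hDne : (U ∩ (closure A ∩ closure B)).Nonempty := by
      by_contra hD
      rw [Set.not_nonempty_iff_eq_empty] at hD
      have hsplit : U ⊆ (closure B)ᶜ ∪ (closure A)ᶜ := by
        intro p hp
        rcases hABU p hp with h | h
        · exact Or.inl fun hc =>
            (eq_empty_iff_forall_notMem.1 hD p) ⟨hp, subset_closure h, hc⟩
        · exact Or.inr fun hc =>
            (eq_empty_iff_forall_notMem.1 hD p) ⟨hp, hc, subset_closure h⟩
      have hne1 : (U ∩ (closure B)ᶜ).Nonempty :=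
        ⟨a, haU, fun hc =>
          (eq_empty_iff_forall_notMem.1 hD a) ⟨haU, subset_closure ⟨haU, haV⟩, hc⟩⟩
      have hne2 : (U ∩ (closure A)ᶜ).Nonempty :=
        ⟨c, hcU, fun hc =>
          (eq_empty_iff_forall_notMem.1 hD c) ⟨hcU, hc, subset_closure ⟨hcU, hcW⟩⟩⟩
      obtain ⟨p, hpU, hp1, hp2⟩ := hint.isPreconnected (closure B)ᶜ (closure A)ᶜ
        isClosed_closure.isOpen_compl isClosed_closure.isOpen_compl hsplit hne1 hne2
      rcases hABU p hpU with h | h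
      · exact hp2 (subset_closure h)
      · exact hp1 (subset_closure h)
    obtain ⟨F, hFcl, hFeq⟩ := hmeas V hV
    obtain ⟨Gs, hGcl, hGeq⟩ := hmeas W hW
    set K := closure A ∩ closure B with hKdef
    have hKcl : IsClosed K := isClosed_closure.inter isClosed_closure
    haveI := hBaire K hKcl
    set Cs : ℕ → Set X := fun n => if n % 2 = 0 then F (n / 2) else Gs (n / 2) with hCsdef
    have hCscl : ∀ n, IsClosed (Cs n) := by
      intro n
      simp only [hCsdef]
      split
      · exact hFcl _
      · exact hGcl _
    have hcovD : K ∩ U ⊆ ⋃ n, Cs n := by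
      intro p hp
      rcases hABU p hp.2 with h | h
      · have hmem : p ∈ ⋃ n, F n := hFeq ▸ h.2
        obtain ⟨k, hk⟩ := mem_iUnion.1 hmem
        refine mem_iUnion.2 ⟨2 * k, ?_⟩
        simp only [hCsdef]
        rw [if_pos (by omega : 2 * k % 2 = 0), (by omega : 2 * k / 2 = k)]
        exact hk
      · have hmem : p ∈ ⋃ n, Gs n := hGeq ▸ h.2
        obtain ⟨k, hk⟩ := mem_iUnion.1 hmem
        refine mem_iUnion.2 ⟨2 * k + 1, ?_⟩
        simp only [hCsdef]
        rw [if_neg (by omega : ¬(2 * k + 1) % 2 = 0), (by omega : (2 * k + 1) / 2 = k)]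
        exact hk
    have hKUne : (K ∩ U).Nonempty := by
      obtain ⟨d, hd1, hd2⟩ := hDne
      exact ⟨d, hd2, hd1⟩
    obtain ⟨n, O, hOopen, hOne, hOK⟩ := baire_piece hKcl Cs hCscl hUo hKUne hcovD
    obtain ⟨x, hxO, hxK, hxU⟩ := hOne
    by_cases hpar : n % 2 = 0
    · have hsubV : O ∩ K ⊆ f ⁻¹' V := by
        intro p hp
        have h1 := hOK hp
        simp only [hCsdef] at h1
        rw [if_pos hpar] at h1
        have h2 : p ∈ ⋃ m, F m := mem_iUnion.2 ⟨n / 2, h1⟩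
        exact hFeq ▸ h2
      exact gibson_contra f hwG hUo hV hcovY hne hOopen hxO hxU hxK.1 hxK.2
        (fun p hpO hpU hpA hpB => hsubV ⟨hpO, hpA, hpB⟩)
    · have hsubW : O ∩ K ⊆ f ⁻¹' W := by
        intro p hp
        have h1 := hOK hp
        simp only [hCsdef] at h1
        rw [if_neg hpar] at h1
        have h2 : p ∈ ⋃ m, Gs m := mem_iUnion.2 ⟨n / 2, h1⟩
        exact hGeq ▸ h2
      have hcovY' : f '' U ⊆ W ∪ V := by rw [union_comm]; exact hcovY
      have hne' : f '' U ∩ (W ∩ V) = ∅ := by rw [inter_comm W V]; exact hne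
      exact gibson_contra f hwG hUo hW hcovY' hne' hOopen hxO hxU hxK.2 hxK.1
        (fun p hpO hpU hpA hpB => hsubW ⟨hpO, hpB, hpA⟩)
  refine ⟨hC.nonempty.image f, ?_⟩
  have h1 : f '' interior C ⊆ f '' C := Set.image_mono interior_subset
  have h2 : f '' C ⊆ closure (f '' interior C) := by
    rintro _ ⟨p, hp, rfl⟩
    exact hwG (interior C) isOpen_interior hint ⟨p, hdense hp, rfl⟩
  exact hpre.subset_closure h1 h2
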